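/- Suppose f_1, …, f_m are real-rooted polynomials of degree n with positive leading coefficients that have a common interlacing. Let μ_1, …, μ_m ≥ 0 with ∑_j μ_j = 1. Then the polynomial ∑_j μ_j f_j is real-rooted, and for all k = 1, …, n, min_j λ_k(f_j) ≤ λ_k(∑_j μ_j f_j) ≤ max_j λ_k(f_j). -/

import Mathlib

open Polynomial

/-- The `k`-th largest element (1-indexed) of a multiset of reals. -/
noncomputable def kthLargest (s : Multiset ℝ) (k : ℕ) : ℝ :=
  (s.sort (· ≤ ·)).getD (Multiset.card s - k) 0

/-- A real polynomial is real-rooted if it splits over `ℝ`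
(equivalently, all of its complex roots are real). -/
def RealRooted (p : Polynomial ℝ) : Prop := p.Splits

/-- `rootK f k` is the `k`-th largest real root of `f`, counted with
multiplicity (1-indexed). -/
noncomputable def rootK (f : Polynomial ℝ) (k : ℕ) : ℝ :=
  kthLargest f.roots k

/-- `g` interlaces `f`: both are real-rooted, `deg g = deg f - 1`, and the
roots alternate: `α_{k+1} ≤ β_k ≤ α_k` for all `k`, where `α` are the roots
of `f` and `β` those of `g`, in decreasing order. -/
def Interlaces (g f : Polynomial ℝ) : Prop :=
  RealRooted f ∧ RealRooted g ∧ g.natDegree + 1 = f.natDegree ∧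
  ∀ k, 1 ≤ k → k ≤ g.natDegree →
    rootK f (k + 1) ≤ rootK g k ∧ rootK g k ≤ rootK f k

/-- count of elements `≥ x` -/
noncomputable def cge (s : Multiset ℝ) (x : ℝ) : ℕ :=
  Multiset.card (s.filter (fun a => x ≤ a))

/-- count of elements `> x` -/
noncomputable def cgt (s : Multiset ℝ) (x : ℝ) : ℕ :=
  Multiset.card (s.filter (fun a => x < a))

lemma kthLargest_pred_iff (s : Multiset ℝ) (P : ℝ → Prop) [DecidablePred P]
    (hup : ∀ a b : ℝ, a ≤ b → P a → P b) (k : ℕ) (hk1 : 1 ≤ k) (hk2 : k ≤ Multiset.card s) :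
    P (kthLargest s k) ↔ k ≤ Multiset.card (s.filter P) := by
  classical
  set L := s.sort (· ≤ ·) with hLdef
  have hL : L.Pairwise (· ≤ ·) := s.pairwise_sort _
  have hlen : L.length = Multiset.card s := Multiset.length_sort _
  have hcoe : (L : Multiset ℝ) = s := Multiset.sort_eq s _
  have hmono : ∀ (i j : ℕ) (hij : i ≤ j) (hj : j < L.length),
      L[i]'(Nat.lt_of_le_of_lt hij hj) ≤ L[j] := by
    intro i j hij hj
    rcases eq_or_lt_of_le hij with rfl | h
    · exact le_refl _
    · exact List.pairwise_iff_getElem.1 hL i j (by omega) hj h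
  have hidx : Multiset.card s - k < L.length := by omega
  have hkth : kthLargest s k = L[Multiset.card s - k] := by
    rw [kthLargest, List.getD_eq_getElem L 0 hidx]
  have hfilt : Multiset.card (s.filter P) = (L.filter (fun b => decide (P b))).length := by
    rw [← hcoe, Multiset.filter_coe, Multiset.coe_card]
  set i := Multiset.card s - k with hi
  have hik : k = L.length - i := by omega
  rw [hkth, hfilt]
  constructor
  · intro hP
    have hsplit : L.filter (fun b => decide (P b)) =
        (L.take i).filter (fun b => decide (P b)) ++ (L.drop i).filter (fun b => decide (P b)) := by
      rw [← List.filter_append, List.take_append_drop]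
    have hdropall : (L.drop i).filter (fun b => decide (P b)) = L.drop i := by
      rw [List.filter_eq_self]
      intro a ha
      rw [List.mem_iff_getElem] at ha
      obtain ⟨j, hj, rfl⟩ := ha
      rw [List.getElem_drop]
      exact decide_eq_true (hup _ _ (hmono i (i + j) (by omega) (by
        have := hj; rw [List.length_drop] at this; omega)) hP)
    rw [hsplit, List.length_append, hdropall, List.length_drop]
    omega
  · intro hlenge
    by_contra hP
    have hsplit : L.filter (fun b => decide (P b)) =
        (L.take (i+1)).filter (fun b => decide (P b)) ++ (L.drop (i+1)).filter (fun b => decide (P b)) := by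
      rw [← List.filter_append, List.take_append_drop]
    have htakenil : (L.take (i+1)).filter (fun b => decide (P b)) = [] := by
      rw [List.filter_eq_nil_iff]
      intro a ha hPa
      rw [List.mem_iff_getElem] at ha
      obtain ⟨j, hj, ha⟩ := ha
      have hjlen : j < L.length := by
        have := hj; rw [List.length_take] at this; omega
      have hji : j ≤ i := by
        have := hj; rw [List.length_take] at this; omega
      rw [List.getElem_take] at ha
      subst ha
      exact hP (hup _ _ (hmono j i hji hidx) (of_decide_eq_true hPa))
    rw [hsplit, List.length_append, htakenil] at hlenge
    have := List.length_filter_le (fun b => decide (P b)) (L.drop (i+1))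
    rw [List.length_drop] at this
    simp only [List.length_nil] at hlenge
    omega

lemma le_kthLargest_iff {s : Multiset ℝ} {k : ℕ} (hk1 : 1 ≤ k) (hk2 : k ≤ Multiset.card s)
    (x : ℝ) : x ≤ kthLargest s k ↔ k ≤ cge s x :=
  kthLargest_pred_iff s (fun a => x ≤ a) (fun _ _ h h' => le_trans h' h) k hk1 hk2

lemma lt_kthLargest_iff {s : Multiset ℝ} {k : ℕ} (hk1 : 1 ≤ k) (hk2 : k ≤ Multiset.card s)
    (x : ℝ) : x < kthLargest s k ↔ k ≤ cgt s x :=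
  kthLargest_pred_iff s (fun a => x < a) (fun _ _ h h' => lt_of_lt_of_le h' h) k hk1 hk2

lemma kthLargest_le_iff {s : Multiset ℝ} {k : ℕ} (hk1 : 1 ≤ k) (hk2 : k ≤ Multiset.card s)
    (x : ℝ) : kthLargest s k ≤ x ↔ cgt s x < k := by
  constructor
  · intro h
    by_contra hc
    push_neg at hc
    exact absurd ((lt_kthLargest_iff hk1 hk2 x).2 hc) (not_lt.2 h)
  · intro h
    by_contra hc
    push_neg at hc
    exact absurd ((lt_kthLargest_iff hk1 hk2 x).1 hc) (by omega)

lemma kthLargest_mem {s : Multiset ℝ} {k : ℕ} (hk1 : 1 ≤ k) (hk2 : k ≤ Multiset.card s) :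
    kthLargest s k ∈ s := by
  have hlen : (s.sort (· ≤ ·)).length = Multiset.card s := Multiset.length_sort _
  have hidx : Multiset.card s - k < (s.sort (· ≤ ·)).length := by omega
  rw [kthLargest, List.getD_eq_getElem _ 0 hidx]
  rw [← Multiset.mem_sort (· ≤ ·)]
  exact List.getElem_mem _

lemma cge_le_card (s : Multiset ℝ) (x : ℝ) : cge s x ≤ Multiset.card s :=
  Multiset.card_le_card (Multiset.filter_le _ s)

lemma cgt_le_card (s : Multiset ℝ) (x : ℝ) : cgt s x ≤ Multiset.card s :=
  Multiset.card_le_card (Multiset.filter_le _ s)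

lemma cgt_le_cge (s : Multiset ℝ) (x : ℝ) : cgt s x ≤ cge s x := by
  exact Multiset.card_le_card (Multiset.monotone_filter_right s (fun a ha => le_of_lt ha))

lemma cge_cons (s : Multiset ℝ) (b x : ℝ) :
    cge (b ::ₘ s) x = cge s x + (if x ≤ b then 1 else 0) := by
  unfold cge
  rw [Multiset.filter_cons]
  split <;> simp [add_comm]

lemma cgt_cons (s : Multiset ℝ) (b x : ℝ) :
    cgt (b ::ₘ s) x = cgt s x + (if x < b then 1 else 0) := by
  unfold cgt
  rw [Multiset.filter_cons]
  split <;> simp [add_comm]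

lemma cge_anti (s : Multiset ℝ) {x y : ℝ} (h : x ≤ y) : cge s y ≤ cge s x := by
  exact Multiset.card_le_card (Multiset.monotone_filter_right s (fun a ha => le_trans h ha))

/-- key pointwise sign lemma -/
lemma sign_eval (f : Polynomial ℝ) (hf : RealRooted f) (hl : 0 ≤ f.leadingCoeff)
    (z : ℝ) (k : ℕ) (h1 : cgt f.roots z ≤ k) (h2 : k ≤ cge f.roots z) :
    0 ≤ (-1 : ℝ) ^ k * f.eval z := by
  classical
  by_cases hz : z ∈ f.roots
  · have : f.IsRoot z := (Polynomial.mem_roots'.1 hz).2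
    rw [this]; ring_nf; simp
  · -- cgt = cge = k
    have hfe : f.roots.filter (fun a => z ≤ a) = f.roots.filter (fun a => z < a) := by
      apply Multiset.filter_congr
      intro a ha
      constructor
      · intro h; rcases lt_or_eq_of_le h with h' | h'
        · exact h'
        · exact absurd (h' ▸ ha) hz
      · exact le_of_lt
    have hk : cgt f.roots z = k := by
      have : cge f.roots z = cgt f.roots z := by unfold cge cgt; rw [hfe]
      omega
    subst hk
    have hprod := Polynomial.Splits.eq_prod_roots hf
    have heval : f.eval z = f.leadingCoeff *
        (Multiset.map (fun a => z - a) f.roots).prod := by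
      conv_lhs => rw [hprod]
      rw [Polynomial.eval_mul, Polynomial.eval_C, Polynomial.eval_multiset_prod,
        Multiset.map_map]
      simp [Function.comp_def]
    set A := (Multiset.map (fun a => a - z) (f.roots.filter (fun a => z < a))).prod with hA0
    set B := (Multiset.map (fun a => z - a) (f.roots.filter (fun a => ¬ z < a))).prod with hB0
    have hsplit : f.roots.filter (fun a => z < a) + f.roots.filter (fun a => ¬ z < a) = f.roots :=
      Multiset.filter_add_not _ _
    have hA : 0 ≤ A := by
      apply Multiset.prod_nonneg
      intro a ha
      obtain ⟨b, hb, rfl⟩ := Multiset.mem_map.1 ha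
      have := (Multiset.mem_filter.1 hb).2
      linarith
    have hB : 0 ≤ B := by
      apply Multiset.prod_nonneg
      intro a ha
      obtain ⟨b, hb, rfl⟩ := Multiset.mem_map.1 ha
      have := (Multiset.mem_filter.1 hb).2
      push_neg at this
      linarith
    have hsq : ((-1:ℝ) ^ (cgt f.roots z)) * ((-1:ℝ) ^ (cgt f.roots z)) = 1 := by
      rw [← pow_add]
      exact Even.neg_one_pow ⟨cgt f.roots z, rfl⟩
    have h1 : (Multiset.map (fun a => z - a) (f.roots.filter (fun a => z < a))).prod =
        (-1 : ℝ) ^ (cgt f.roots z) * A := by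
      have : Multiset.map (fun a => z - a) (f.roots.filter (fun a => z < a)) =
          Multiset.map Neg.neg (Multiset.map (fun a => a - z) (f.roots.filter (fun a => z < a))) := by
        rw [Multiset.map_map]; apply Multiset.map_congr rfl; intro a _; simp
      rw [this, Multiset.prod_map_neg, Multiset.card_map, hA0]
      rfl
    have heval2 : f.eval z = f.leadingCoeff * ((-1:ℝ) ^ (cgt f.roots z) * A * B) := by
      conv_lhs => rw [heval, ← hsplit, Multiset.map_add, Multiset.prod_add, h1]
    rw [heval2]
    have key : (-1:ℝ) ^ (cgt f.roots z) *
        (f.leadingCoeff * ((-1:ℝ) ^ (cgt f.roots z) * A * B)) = f.leadingCoeff * (A * B) := by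
      linear_combination (f.leadingCoeff * A * B) * hsq
    rw [key]
    exact mul_nonneg hl (mul_nonneg hA hB)
lemma sign_eval_pos (f : Polynomial ℝ) (hf : RealRooted f) (hl : 0 < f.leadingCoeff)
    (z : ℝ) (hz : z ∉ f.roots) (k : ℕ) (h1 : cgt f.roots z ≤ k) (h2 : k ≤ cge f.roots z) :
    0 < (-1 : ℝ) ^ k * f.eval z := by
  have hne : f ≠ 0 := Polynomial.leadingCoeff_ne_zero.1 (ne_of_gt hl)
  have hev : f.eval z ≠ 0 := by
    intro h
    exact hz (Polynomial.mem_roots'.2 ⟨hne, h⟩)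
  have := sign_eval f hf (le_of_lt hl) z k h1 h2
  rcases lt_or_eq_of_le this with h | h
  · exact h
  · exfalso
    apply hev
    have hpow : (-1:ℝ)^k ≠ 0 := by
      apply pow_ne_zero; norm_num
    field_simp at h
    exact (mul_eq_zero.1 h.symm).resolve_left hpow

lemma Fbasic {m n : ℕ} (hm : 0 < m) (f : Fin m → Polynomial ℝ)
    (hdeg : ∀ j, (f j).natDegree = n) (hlead : ∀ j, 0 < (f j).leadingCoeff)
    (μ : Fin m → ℝ) (hμ0 : ∀ j, 0 ≤ μ j) (hμ1 : ∑ j, μ j = 1) :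
    (∑ j, μ j • f j).natDegree = n ∧ 0 < (∑ j, μ j • f j).leadingCoeff := by
  set F := ∑ j, μ j • f j with hF
  have hcoeff : F.coeff n = ∑ j, μ j * (f j).leadingCoeff := by
    rw [hF, Polynomial.finset_sum_coeff]
    apply Finset.sum_congr rfl
    intro j _
    rw [Polynomial.coeff_smul, smul_eq_mul]
    congr 1
    rw [← hdeg j]
    rfl
  have hpos : 0 < F.coeff n := by
    rw [hcoeff]
    have hex : ∃ j ∈ Finset.univ, 0 < μ j := by
      by_contra h
      push_neg at h
      have : ∑ j, μ j ≤ 0 := Finset.sum_nonpos (fun j hj => h j hj)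
      rw [hμ1] at this; linarith
    obtain ⟨j0, _, hj0⟩ := hex
    apply Finset.sum_pos'
    · intro j _
      exact mul_nonneg (hμ0 j) (le_of_lt (hlead j))
    · exact ⟨j0, Finset.mem_univ j0, mul_pos hj0 (hlead j0)⟩
  have hle : F.natDegree ≤ n := by
    apply Polynomial.natDegree_sum_le_of_forall_le
    intro j _
    exact le_trans (Polynomial.natDegree_smul_le _ _) (le_of_eq (hdeg j))
  have hdegF : F.natDegree = n :=
    le_antisymm hle (Polynomial.le_natDegree_of_ne_zero (ne_of_gt hpos))
  refine ⟨hdegF, ?_⟩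
  rw [Polynomial.leadingCoeff, hdegF]
  exact hpos

lemma interlace_counts {s t : Multiset ℝ} {N : ℕ}
    (hs : Multiset.card s = N) (ht : Multiset.card t = N - 1) (hN : 1 ≤ N)
    (hint : ∀ k, 1 ≤ k → k ≤ N - 1 →
      kthLargest s (k+1) ≤ kthLargest t k ∧ kthLargest t k ≤ kthLargest s k) (x : ℝ) :
    cgt t x ≤ cgt s x ∧ cgt s x ≤ cgt t x + 1 ∧ cge t x ≤ cge s x ∧ cge s x ≤ cge t x + 1 := by
  have hcardt : Multiset.card t = N - 1 := ht
  have hcards : Multiset.card s = N := hs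
  refine ⟨?_, ?_, ?_, ?_⟩
  · rcases Nat.eq_zero_or_pos (cgt t x) with h | h
    · omega
    · set k := cgt t x with hk
      have hk2 : k ≤ N - 1 := by rw [hk, ← hcardt]; exact cgt_le_card t x
      have hlt : x < kthLargest t k := by
        rw [lt_kthLargest_iff h (by omega)]
      have hts : kthLargest t k ≤ kthLargest s k := (hint k h hk2).2
      have : x < kthLargest s k := lt_of_lt_of_le hlt hts
      rw [lt_kthLargest_iff h (by omega)] at this
      exact this
  · rcases Nat.lt_or_ge (cgt s x) 2 with h | h
    · omega
    · set k := cgt s x with hk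
      have hk2 : k ≤ N := by rw [hk, ← hcards]; exact cgt_le_card s x
      have hlt : x < kthLargest s k := by
        rw [lt_kthLargest_iff (by omega) (by omega)]
      have hss : kthLargest s k ≤ kthLargest t (k-1) := by
        have := (hint (k-1) (by omega) (by omega)).1
        have hkk : k - 1 + 1 = k := by omega
        rwa [hkk] at this
      have : x < kthLargest t (k-1) := lt_of_lt_of_le hlt hss
      rw [lt_kthLargest_iff (by omega) (by omega)] at this
      omega
  · rcases Nat.eq_zero_or_pos (cge t x) with h | h
    · omega
    · set k := cge t x with hk
      have hk2 : k ≤ N - 1 := by rw [hk, ← hcardt]; exact cge_le_card t x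
      have hlt : x ≤ kthLargest t k := by
        rw [le_kthLargest_iff h (by omega)]
      have hts : kthLargest t k ≤ kthLargest s k := (hint k h hk2).2
      have : x ≤ kthLargest s k := le_trans hlt hts
      rw [le_kthLargest_iff h (by omega)] at this
      exact this
  · rcases Nat.lt_or_ge (cge s x) 2 with h | h
    · omega
    · set k := cge s x with hk
      have hk2 : k ≤ N := by rw [hk, ← hcards]; exact cge_le_card s x
      have hlt : x ≤ kthLargest s k := by
        rw [le_kthLargest_iff (by omega) (by omega)]
      have hss : kthLargest s k ≤ kthLargest t (k-1) := by
        have := (hint (k-1) (by omega) (by omega)).1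
        have hkk : k - 1 + 1 = k := by omega
        rwa [hkk] at this
      have : x ≤ kthLargest t (k-1) := le_trans hlt hss
      rw [le_kthLargest_iff (by omega) (by omega)] at this
      omega

lemma counts_interlace {s t : Multiset ℝ} {N : ℕ}
    (hs : Multiset.card s = N) (ht : Multiset.card t = N - 1)
    (hc : ∀ x, cgt t x ≤ cgt s x ∧ cgt s x ≤ cgt t x + 1 ∧
      cge t x ≤ cge s x ∧ cge s x ≤ cge t x + 1) :
    ∀ k, 1 ≤ k → k ≤ N - 1 →
      kthLargest s (k+1) ≤ kthLargest t k ∧ kthLargest t k ≤ kthLargest s k := by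
  intro k hk1 hk2
  have hN : 2 ≤ N := by omega
  constructor
  · set x := kthLargest t k with hx
    rw [kthLargest_le_iff (by omega) (by omega : k + 1 ≤ Multiset.card s)]
    have h1 : cgt t x < k := by
      rw [← kthLargest_le_iff hk1 (by omega : k ≤ Multiset.card t)]
    have := (hc x).2.1
    omega
  · set x := kthLargest t k with hx
    rw [le_kthLargest_iff hk1 (by omega : k ≤ Multiset.card s)]
    have h1 : k ≤ cge t x := by
      rw [← le_kthLargest_iff hk1 (by omega : k ≤ Multiset.card t)]
    exact le_trans h1 (hc x).2.2.1

lemma cge_erase {s : Multiset ℝ} {b : ℝ} (hb : b ∈ s) (x : ℝ) :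
    cge s x = cge (s.erase b) x + (if x ≤ b then 1 else 0) := by
  conv_lhs => rw [← Multiset.cons_erase hb]
  rw [cge_cons]

lemma cgt_erase {s : Multiset ℝ} {b : ℝ} (hb : b ∈ s) (x : ℝ) :
    cgt s x = cgt (s.erase b) x + (if x < b then 1 else 0) := by
  conv_lhs => rw [← Multiset.cons_erase hb]
  rw [cgt_cons]
lemma rootK_def (p : Polynomial ℝ) (k : ℕ) : rootK p k = kthLargest p.roots k := rfl

lemma le_rootK_iff {p : Polynomial ℝ} {k : ℕ} (hk1 : 1 ≤ k) (hk2 : k ≤ Multiset.card p.roots)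
    (x : ℝ) : x ≤ rootK p k ↔ k ≤ cge p.roots x := le_kthLargest_iff hk1 hk2 x

lemma rootK_le_iff {p : Polynomial ℝ} {k : ℕ} (hk1 : 1 ≤ k) (hk2 : k ≤ Multiset.card p.roots)
    (x : ℝ) : rootK p k ≤ x ↔ cgt p.roots x < k := kthLargest_le_iff hk1 hk2 x

lemma eval_sum_mu {m : ℕ} (f : Fin m → Polynomial ℝ) (μ : Fin m → ℝ) (z : ℝ) :
    (∑ j, μ j • f j).eval z = ∑ j, μ j * (f j).eval z := by
  rw [Polynomial.eval_finset_sum]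
  apply Finset.sum_congr rfl
  intro j _
  rw [Polynomial.eval_smul, smul_eq_mul]

lemma sig_sum {m : ℕ} (f : Fin m → Polynomial ℝ) (μ : Fin m → ℝ)
    (hrr : ∀ j, RealRooted (f j)) (hlead : ∀ j, 0 < (f j).leadingCoeff)
    (hμ0 : ∀ j, 0 ≤ μ j) (z : ℝ) (k : ℕ)
    (h : ∀ j, cgt (f j).roots z ≤ k ∧ k ≤ cge (f j).roots z) :
    0 ≤ (-1 : ℝ) ^ k * (∑ j, μ j • f j).eval z := by
  rw [eval_sum_mu, Finset.mul_sum]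
  apply Finset.sum_nonneg
  intro j _
  have h1 := sign_eval (f j) (hrr j) (le_of_lt (hlead j)) z k (h j).1 (h j).2
  have h2 := mul_nonneg (hμ0 j) h1
  calc (0:ℝ) ≤ μ j * ((-1)^k * (f j).eval z) := h2
    _ = (-1)^k * (μ j * (f j).eval z) := by ring

lemma roots_card_of_realRooted {p : Polynomial ℝ} (h : RealRooted p) :
    Multiset.card p.roots = p.natDegree := (Polynomial.splits_iff_card_roots (f := p)).1 h
def Hyp (n : ℕ) {m : ℕ} (f : Fin m → Polynomial ℝ) (g : Polynomial ℝ) (μ : Fin m → ℝ) : Prop :=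
  (∀ j, (f j).natDegree = n) ∧ (∀ j, 0 < (f j).leadingCoeff) ∧ (∀ j, RealRooted (f j)) ∧
  (∀ j, Interlaces g (f j)) ∧ (∀ j, 0 ≤ μ j) ∧ (∑ j, μ j = 1)

def Concl (n : ℕ) {m : ℕ} (f : Fin m → Polynomial ℝ) (μ : Fin m → ℝ) : Prop :=
  RealRooted (∑ j, μ j • f j) ∧
  ∀ k, 1 ≤ k → k ≤ n →
    (∀ y, (∀ j, y ≤ rootK (f j) k) → y ≤ rootK (∑ j, μ j • f j) k) ∧
    (∀ x, (∀ j, rootK (f j) k ≤ x) → rootK (∑ j, μ j • f j) k ≤ x)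

lemma case2_lemma' (n' m : ℕ) (hm : 0 < m) (f : Fin m → Polynomial ℝ) (g : Polynomial ℝ)
    (μ : Fin m → ℝ) (hh : Hyp (n'+1) f g μ)
    (ih : ∀ (m₂ : ℕ), 0 < m₂ → ∀ (f₂ : Fin m₂ → Polynomial ℝ) (g₂ : Polynomial ℝ)
      (μ₂ : Fin m₂ → ℝ), Hyp n' f₂ g₂ μ₂ → Concl n' f₂ μ₂)
    (hdegen : ∃ k, 1 ≤ k ∧ k ≤ n' ∧ (∑ j, μ j • f j).eval (rootK g k) = 0) :
    Concl (n'+1) f μ := by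
  obtain ⟨hdeg, hlead, hrr, hg, hμ0, hμ1⟩ := hh
  obtain ⟨k0, hk01, hk02, hk03⟩ := hdegen
  set β := rootK g k0 with hβ
  set F := ∑ j, μ j • f j with hF
  have hFb := Fbasic hm f hdeg hlead μ hμ0 hμ1
  have hcardf : ∀ j, Multiset.card (f j).roots = n'+1 := fun j => by
    rw [roots_card_of_realRooted (hrr j), hdeg j]
  have hgdeg : g.natDegree = n' := by
    have := (hg ⟨0,hm⟩).2.2.1; rw [hdeg] at this; omega
  have hgrr : RealRooted g := (hg ⟨0,hm⟩).2.1
  have hcardg : Multiset.card g.roots = n' := by rw [roots_card_of_realRooted hgrr, hgdeg]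
  have hintj : ∀ j, ∀ k, 1 ≤ k → k ≤ n' →
      rootK (f j) (k+1) ≤ rootK g k ∧ rootK g k ≤ rootK (f j) k := by
    intro j; have h := (hg j).2.2.2; rw [hgdeg] at h; exact h
  have hsgnj : ∀ j, cgt (f j).roots β ≤ k0 ∧ k0 ≤ cge (f j).roots β := by
    intro j
    constructor
    · have h1 : rootK (f j) (k0+1) ≤ β := (hintj j k0 hk01 hk02).1
      have := (rootK_le_iff (p := f j) (k := k0+1) (by omega) (by rw [hcardf j]; omega) β).1 h1
      omega
    · exact (le_rootK_iff hk01 (by rw [hcardf j]; omega) β).1 (hintj j k0 hk01 hk02).2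
  have hzero : ∀ j, μ j * (f j).eval β = 0 := by
    have hsum0 : ∑ j, μ j * ((-1:ℝ)^k0 * (f j).eval β) = 0 := by
      have he : ∑ j, μ j * ((-1:ℝ)^k0 * (f j).eval β) = (-1:ℝ)^k0 * F.eval β := by
        rw [hF, eval_sum_mu, Finset.mul_sum]
        apply Finset.sum_congr rfl; intro j _; ring
      rw [he, hk03, mul_zero]
    have hnn : ∀ j ∈ Finset.univ, (0:ℝ) ≤ μ j * ((-1:ℝ)^k0 * (f j).eval β) := by
      intro j _
      exact mul_nonneg (hμ0 j)
        (sign_eval (f j) (hrr j) (le_of_lt (hlead j)) β k0 (hsgnj j).1 (hsgnj j).2)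
    have hall := (Finset.sum_eq_zero_iff_of_nonneg hnn).1 hsum0
    intro j
    have hj := hall j (Finset.mem_univ j)
    have hp : (-1:ℝ)^k0 ≠ 0 := pow_ne_zero _ (by norm_num)
    rcases mul_eq_zero.1 hj with h | h
    · rw [h, zero_mul]
    · rcases mul_eq_zero.1 h with h' | h'
      · exact absurd h' hp
      · rw [h', mul_zero]
  have hμpos : ∃ j0 : Fin m, 0 < μ j0 := by
    by_contra hcon; push_neg at hcon
    have : ∑ j, μ j ≤ 0 := Finset.sum_nonpos (fun j _ => hcon j)
    rw [hμ1] at this; linarith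
  obtain ⟨j0, hj0⟩ := hμpos
  have hfj0 : (f j0).eval β = 0 := by
    rcases mul_eq_zero.1 (hzero j0) with h | h
    · exact absurd h (ne_of_gt hj0)
    · exact h
  set f' : Fin m → Polynomial ℝ := fun j => if (f j).eval β = 0 then f j else f j0 with hf'
  have hf'val : ∀ j, f' j = f j ∨ f' j = f j0 := by
    intro j; by_cases hc : (f j).eval β = 0
    · left; simp [hf', hc]
    · right; simp [hf', hc]
  have hf'root : ∀ j, (f' j).eval β = 0 := by
    intro j; by_cases hc : (f j).eval β = 0
    · simpa [hf', hc] using hc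
    · simpa [hf', hc] using hfj0
  have hF' : ∑ j, μ j • f' j = F := by
    rw [hF]; apply Finset.sum_congr rfl; intro j _
    by_cases hc : (f j).eval β = 0
    · simp [hf', hc]
    · have hμj : μ j = 0 := by
        rcases mul_eq_zero.1 (hzero j) with h | h
        · exact h
        · exact absurd h hc
      simp [hf', hc, hμj]
  have hdeg' : ∀ j, (f' j).natDegree = n'+1 := fun j => by
    rcases hf'val j with h|h <;> rw [h] <;> exact hdeg _
  have hlead' : ∀ j, 0 < (f' j).leadingCoeff := fun j => by
    rcases hf'val j with h|h <;> rw [h] <;> exact hlead _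
  have hrr' : ∀ j, RealRooted (f' j) := fun j => by
    rcases hf'val j with h|h <;> rw [h] <;> exact hrr _
  have hcardf' : ∀ j, Multiset.card (f' j).roots = n'+1 := fun j => by
    rw [roots_card_of_realRooted (hrr' j), hdeg' j]
  have hintj' : ∀ j, ∀ k, 1 ≤ k → k ≤ n' →
      rootK (f' j) (k+1) ≤ rootK g k ∧ rootK g k ≤ rootK (f' j) k := by
    intro j; rcases hf'val j with h|h <;> rw [h] <;> exact hintj _
  set q : Fin m → Polynomial ℝ := fun j => (f' j) /ₘ (Polynomial.X - Polynomial.C β) with hq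
  have hfac : ∀ j, (Polynomial.X - Polynomial.C β) * q j = f' j := fun j =>
    Polynomial.mul_divByMonic_eq_iff_isRoot.2 (hf'root j)
  have hf'ne : ∀ j, f' j ≠ 0 := fun j => Polynomial.leadingCoeff_ne_zero.1 (ne_of_gt (hlead' j))
  have hqne : ∀ j, q j ≠ 0 := by
    intro j h0
    have hx := hfac j; rw [h0, mul_zero] at hx; exact hf'ne j hx.symm
  have hqdeg : ∀ j, (q j).natDegree = n' := by
    intro j
    have hd := Polynomial.natDegree_mul (Polynomial.X_sub_C_ne_zero β) (hqne j)
    rw [hfac j, hdeg' j, Polynomial.natDegree_X_sub_C] at hd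
    omega
  have hqlead : ∀ j, 0 < (q j).leadingCoeff := by
    intro j
    have hl := Polynomial.leadingCoeff_mul (Polynomial.X - Polynomial.C β) (q j)
    rw [hfac j, (Polynomial.monic_X_sub_C β).leadingCoeff, one_mul] at hl
    rw [← hl]; exact hlead' j
  have hrootsf' : ∀ j, (f' j).roots = β ::ₘ (q j).roots := by
    intro j
    conv_lhs => rw [← hfac j]
    rw [Polynomial.roots_mul (by rw [hfac j]; exact hf'ne j), Polynomial.roots_X_sub_C,
      Multiset.singleton_add]
  have hqrr : ∀ j, RealRooted (q j) := by
    intro j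
    rw [RealRooted, Polynomial.splits_iff_card_roots (f := q j), hqdeg j]
    have h1 : Multiset.card (f' j).roots = n'+1 := hcardf' j
    rw [hrootsf' j] at h1
    simpa using h1
  have hcardq : ∀ j, Multiset.card (q j).roots = n' := fun j => by
    rw [roots_card_of_realRooted (hqrr j), hqdeg j]
  have hβg : β ∈ g.roots := by
    rw [hβ, rootK_def]
    exact kthLargest_mem hk01 (by rw [hcardg]; omega)
  set g' : Polynomial ℝ := g /ₘ (Polynomial.X - Polynomial.C β) with hg'def
  have hgne : g ≠ 0 := by
    intro h0; rw [h0] at hcardg; simp at hcardg; omega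
  have hgfac : (Polynomial.X - Polynomial.C β) * g' = g :=
    Polynomial.mul_divByMonic_eq_iff_isRoot.2 (Polynomial.isRoot_of_mem_roots hβg)
  have hg'ne : g' ≠ 0 := by intro h0; rw [h0, mul_zero] at hgfac; exact hgne hgfac.symm
  have hg'deg : g'.natDegree = n' - 1 := by
    have hd := Polynomial.natDegree_mul (Polynomial.X_sub_C_ne_zero β) hg'ne
    rw [hgfac, hgdeg, Polynomial.natDegree_X_sub_C] at hd
    omega
  have hrootsg : g.roots = β ::ₘ g'.roots := by
    conv_lhs => rw [← hgfac]
    rw [Polynomial.roots_mul (by rw [hgfac]; exact hgne), Polynomial.roots_X_sub_C,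
      Multiset.singleton_add]
  have hg'rr : RealRooted g' := by
    rw [RealRooted, Polynomial.splits_iff_card_roots (f := g'), hg'deg]
    have h1 := hcardg
    rw [hrootsg] at h1
    simp at h1
    omega
  have hcardg' : Multiset.card g'.roots = n' - 1 := by
    rw [roots_card_of_realRooted hg'rr, hg'deg]
  have hint2 : ∀ j, Interlaces g' (q j) := by
    intro j
    refine ⟨hqrr j, hg'rr, by rw [hg'deg, hqdeg]; omega, ?_⟩
    rw [hg'deg]
    have hcnt : ∀ x, cgt g'.roots x ≤ cgt (q j).roots x ∧ cgt (q j).roots x ≤ cgt g'.roots x + 1 ∧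
        cge g'.roots x ≤ cge (q j).roots x ∧ cge (q j).roots x ≤ cge g'.roots x + 1 := by
      intro x
      have h1 := interlace_counts (s := (f' j).roots) (t := g.roots) (N := n'+1)
        (hcardf' j) (by rw [hcardg]; omega) (by omega)
        (fun k hkk1 hkk2 => hintj' j k hkk1 (by omega)) x
      have e1 : cgt (f' j).roots x = cgt (q j).roots x + (if x < β then 1 else 0) := by
        rw [hrootsf' j, cgt_cons]
      have e2 : cge (f' j).roots x = cge (q j).roots x + (if x ≤ β then 1 else 0) := by
        rw [hrootsf' j, cge_cons]
      have e3 : cgt g.roots x = cgt g'.roots x + (if x < β then 1 else 0) := by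
        rw [hrootsg, cgt_cons]
      have e4 : cge g.roots x = cge g'.roots x + (if x ≤ β then 1 else 0) := by
        rw [hrootsg, cge_cons]
      rw [e1, e2, e3, e4] at h1
      rcases h1 with ⟨a1, a2, a3, a4⟩
      omega
    have hres := counts_interlace (s := (q j).roots) (t := g'.roots) (N := n')
      (hcardq j) hcardg' hcnt
    intro k hkk1 hkk2
    exact hres k hkk1 (by omega)
  obtain ⟨hHrr, hHbound⟩ := ih m hm q g' μ ⟨hqdeg, hqlead, hqrr, hint2, hμ0, hμ1⟩
  set H := ∑ j, μ j • q j with hH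
  have hHfacts := Fbasic hm q hqdeg hqlead μ hμ0 hμ1
  have hcardH : Multiset.card H.roots = n' := by
    rw [roots_card_of_realRooted hHrr, hHfacts.1]
  have hFH : F = (Polynomial.X - Polynomial.C β) * H := by
    rw [← hF', hH, Finset.mul_sum]
    apply Finset.sum_congr rfl
    intro j _
    rw [mul_smul_comm, hfac j]
  have hFne : F ≠ 0 := Polynomial.leadingCoeff_ne_zero.1 (ne_of_gt hFb.2)
  have hFroots : F.roots = β ::ₘ H.roots := by
    conv_lhs => rw [hFH]
    rw [Polynomial.roots_mul (by rw [← hFH]; exact hFne), Polynomial.roots_X_sub_C,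
      Multiset.singleton_add]
  have hcardF : Multiset.card F.roots = n'+1 := by rw [hFroots]; simp [hcardH]
  constructor
  · show RealRooted F
    rw [RealRooted, hFH]
    exact (Polynomial.Splits.X_sub_C _).mul hHrr
  · intro k hk1 hk2
    constructor
    · intro y hy
      have hy' : ∀ j, y ≤ rootK (f' j) k := by
        intro j; rcases hf'val j with h|h <;> rw [h] <;> exact hy _
      have hyc : ∀ j, k ≤ cge (q j).roots y + (if y ≤ β then 1 else 0) := by
        intro j
        have hv := (le_rootK_iff hk1 (by rw [hcardf' j]; omega) y).1 (hy' j)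
        rwa [hrootsf' j, cge_cons] at hv
      rw [le_rootK_iff hk1 (by rw [hcardF]; omega) y]
      rw [hFroots, cge_cons]
      by_cases hyβ : y ≤ β
      · simp only [if_pos hyβ] at hyc ⊢
        rcases Nat.eq_or_lt_of_le hk1 with h1 | h1
        · omega
        · have hyh : ∀ j, y ≤ rootK (q j) (k-1) := by
            intro j
            rw [le_rootK_iff (by omega) (by rw [hcardq j]; omega) y]
            have := hyc j; omega
          have hH1 := (hHbound (k-1) (by omega) (by omega)).1 y hyh
          have hH2 := (le_rootK_iff (p := H) (by omega) (by rw [hcardH]; omega) y).1 hH1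
          omega
      · simp only [if_neg hyβ] at hyc ⊢
        have hkn : k ≤ n' := by
          have h1 := hyc j0
          have h2 := cge_le_card (q j0).roots y
          rw [hcardq j0] at h2
          omega
        have hyh : ∀ j, y ≤ rootK (q j) k := by
          intro j
          rw [le_rootK_iff hk1 (by rw [hcardq j]; omega) y]
          have := hyc j; omega
        have hH1 := (hHbound k hk1 hkn).1 y hyh
        have hH2 := (le_rootK_iff (p := H) hk1 (by rw [hcardH]; omega) y).1 hH1
        omega
    · intro x hx
      have hx' : ∀ j, rootK (f' j) k ≤ x := by
        intro j; rcases hf'val j with h|h <;> rw [h] <;> exact hx _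
      have hxc : ∀ j, cgt (q j).roots x + (if x < β then 1 else 0) < k := by
        intro j
        have hv := (rootK_le_iff hk1 (by rw [hcardf' j]; omega) x).1 (hx' j)
        rwa [hrootsf' j, cgt_cons] at hv
      rw [rootK_le_iff hk1 (by rw [hcardF]; omega) x]
      rw [hFroots, cgt_cons]
      by_cases hxβ : x < β
      · simp only [if_pos hxβ] at hxc ⊢
        have hk2' : 2 ≤ k := by have := hxc j0; omega
        have hxh : ∀ j, rootK (q j) (k-1) ≤ x := by
          intro j
          rw [rootK_le_iff (by omega) (by rw [hcardq j]; omega) x]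
          have := hxc j; omega
        have hH1 := (hHbound (k-1) (by omega) (by omega)).2 x hxh
        have hH2 := (rootK_le_iff (p := H) (by omega) (by rw [hcardH]; omega) x).1 hH1
        omega
      · simp only [if_neg hxβ] at hxc ⊢
        rcases Nat.lt_or_ge k (n'+1) with hkn | hkn
        · have hxh : ∀ j, rootK (q j) k ≤ x := by
            intro j
            rw [rootK_le_iff hk1 (by rw [hcardq j]; omega) x]
            have := hxc j; omega
          have hH1 := (hHbound k hk1 (by omega)).2 x hxh
          have hH2 := (rootK_le_iff (p := H) hk1 (by rw [hcardH]; omega) x).1 hH1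
          omega
        · have hc := cgt_le_card H.roots x
          rw [hcardH] at hc
          omega
set_option maxHeartbeats 2000000 in
lemma case1_lemma' (n' m : ℕ) (hm : 0 < m) (f : Fin m → Polynomial ℝ) (g : Polynomial ℝ)
    (μ : Fin m → ℝ) (hh : Hyp (n'+1) f g μ)
    (hstrict : ∀ k, 1 ≤ k → k ≤ n' → (∑ j, μ j • f j).eval (rootK g k) ≠ 0) :
    Concl (n'+1) f μ := by
  obtain ⟨hdeg, hlead, hrr, hg, hμ0, hμ1⟩ := hh
  set n := n' + 1 with hn
  set F := ∑ j, μ j • f j with hF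
  have hFb := Fbasic hm f hdeg hlead μ hμ0 hμ1
  have hFdeg : F.natDegree = n := hFb.1
  have hFlead : 0 < F.leadingCoeff := hFb.2
  have hFne : F ≠ 0 := Polynomial.leadingCoeff_ne_zero.1 (ne_of_gt hFlead)
  have hcardf : ∀ j, Multiset.card (f j).roots = n := fun j => by
    rw [roots_card_of_realRooted (hrr j), hdeg j]
  have hgdeg : g.natDegree = n' := by
    have := (hg ⟨0,hm⟩).2.2.1; rw [hdeg] at this; omega
  have hcardg : Multiset.card g.roots = n' := by
    rw [roots_card_of_realRooted (hg ⟨0,hm⟩).2.1, hgdeg]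
  have hintj : ∀ j, ∀ k, 1 ≤ k → k ≤ n' →
      rootK (f j) (k+1) ≤ rootK g k ∧ rootK g k ≤ rootK (f j) k := by
    intro j; have h := (hg j).2.2.2; rw [hgdeg] at h; exact h
  have hne : (Finset.univ : Finset (Fin m)).Nonempty := ⟨⟨0, hm⟩, Finset.mem_univ _⟩
  set zlo : ℕ → ℝ := fun k => Finset.univ.inf' hne (fun j => rootK (f j) k) with hzlo
  set zhi : ℕ → ℝ := fun k => Finset.univ.sup' hne (fun j => rootK (f j) k) with hzhi
  have hlo_le : ∀ k j, zlo k ≤ rootK (f j) k := fun k j => Finset.inf'_le _ (Finset.mem_univ j)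
  have hhi_ge : ∀ k j, rootK (f j) k ≤ zhi k := by
    intro k j
    simp only [hzhi]
    exact Finset.le_sup' (fun j => rootK (f j) k) (Finset.mem_univ j)
  have hlohi : ∀ k, zlo k ≤ zhi k := fun k => le_trans (hlo_le k ⟨0,hm⟩) (hhi_ge k ⟨0,hm⟩)
  have hsign_lo : ∀ k, 1 ≤ k → k ≤ n → 0 ≤ (-1:ℝ)^k * F.eval (zlo k) := by
    intro k hk1 hk2
    apply sig_sum f μ hrr hlead hμ0
    intro j
    constructor
    · rcases Nat.lt_or_ge k n with hkn | hkn
      · have h1 : rootK (f j) (k+1) ≤ zlo k := by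
          apply Finset.le_inf'
          intro i _
          exact le_trans (hintj j k hk1 (by omega)).1 (hintj i k hk1 (by omega)).2
        have := (rootK_le_iff (p := f j) (k := k+1) (by omega)
          (by rw [hcardf j]; omega) (zlo k)).1 h1
        omega
      · have := cgt_le_card (f j).roots (zlo k); rw [hcardf j] at this; omega
    · exact (le_rootK_iff hk1 (by rw [hcardf j]; omega) (zlo k)).1 (hlo_le k j)
  have hsign_hi : ∀ k, 1 ≤ k → k ≤ n → 0 ≤ (-1:ℝ)^(k-1) * F.eval (zhi k) := by
    intro k hk1 hk2
    apply sig_sum f μ hrr hlead hμ0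
    intro j
    constructor
    · have h1 : rootK (f j) k ≤ zhi k := hhi_ge k j
      have := (rootK_le_iff hk1 (by rw [hcardf j]; omega) (zhi k)).1 h1
      omega
    · rcases Nat.eq_or_lt_of_le hk1 with h1 | h1
      · omega
      · have h2 : zhi k ≤ rootK (f j) (k-1) := by
          have h3 : zhi k ≤ rootK g (k-1) := by
            apply Finset.sup'_le
            intro i _
            have h4 := (hintj i (k-1) (by omega) (by omega)).1
            have hkk : k - 1 + 1 = k := by omega
            rwa [hkk] at h4
          exact le_trans h3 (hintj j (k-1) (by omega) (by omega)).2
        have := (le_rootK_iff (p := f j) (k := k-1) (by omega)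
          (by rw [hcardf j]; omega) (zhi k)).1 h2
        omega
  have hsign_beta : ∀ k, 1 ≤ k → k ≤ n' → 0 < (-1:ℝ)^k * F.eval (rootK g k) := by
    intro k hk1 hk2
    have hweak : 0 ≤ (-1:ℝ)^k * F.eval (rootK g k) := by
      apply sig_sum f μ hrr hlead hμ0
      intro j
      constructor
      · have h1 : rootK (f j) (k+1) ≤ rootK g k := (hintj j k hk1 hk2).1
        have := (rootK_le_iff (p := f j) (k := k+1) (by omega)
          (by rw [hcardf j]; omega) _).1 h1
        omega
      · exact (le_rootK_iff hk1 (by rw [hcardf j]; omega) _).1 (hintj j k hk1 hk2).2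
    rcases lt_or_eq_of_le hweak with h | h
    · exact h
    · exfalso
      apply hstrict k hk1 hk2
      have hp : (-1:ℝ)^k ≠ 0 := pow_ne_zero _ (by norm_num)
      rcases mul_eq_zero.1 h.symm with h'|h'
      · exact absurd h' hp
      · exact h'
  have hbeta_lt : ∀ k, 1 ≤ k → k + 1 ≤ n' → rootK g (k+1) < rootK g k := by
    intro k hk1 hk2
    have hle : rootK g (k+1) ≤ rootK g k := by
      rw [le_rootK_iff hk1 (by rw [hcardg]; omega)]
      have := (le_rootK_iff (p := g) (k := k+1) (by omega)
        (by rw [hcardg]; omega) (rootK g (k+1))).1 le_rfl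
      omega
    rcases lt_or_eq_of_le hle with h | h
    · exact h
    · exfalso
      have s1 := hsign_beta k hk1 (by omega)
      have s2 := hsign_beta (k+1) (by omega) hk2
      rw [h] at s2
      have hp : (-1:ℝ)^(k+1) = -(-1:ℝ)^k := by rw [pow_succ]; ring
      rw [hp] at s2
      linarith
  -- top point
  have hdegpos : 0 < F.degree := Polynomial.natDegree_pos_iff_degree_pos.1 (by omega)
  have htop := Polynomial.tendsto_atTop_of_leadingCoeff_nonneg F hdegpos (le_of_lt hFlead)
  obtain ⟨B, hB⟩ := Filter.eventually_atTop.1 (htop.eventually_ge_atTop 1)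
  set T := max B (zhi 1) + 1 with hT
  have hTpos : 0 < F.eval T := by
    have h1 := hB T (by rw [hT]; have := le_max_left B (zhi 1); linarith)
    linarith
  have hThi : zhi 1 < T := by rw [hT]; have := le_max_right B (zhi 1); linarith
  -- bottom point
  set G := ((-1:ℝ)^n) • (F.comp (-Polynomial.X)) with hG
  have hGeval : ∀ x : ℝ, G.eval x = (-1:ℝ)^n * F.eval (-x) := by
    intro x
    rw [hG, Polynomial.eval_smul, Polynomial.eval_comp]
    simp [smul_eq_mul]
  have hGdeg' : (F.comp (-Polynomial.X)).natDegree = n := by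
    rw [Polynomial.natDegree_comp, Polynomial.natDegree_neg, Polynomial.natDegree_X, mul_one, hFdeg]
  have hGne : F.comp (-Polynomial.X) ≠ 0 := by
    intro h0
    rw [h0] at hGdeg'
    simp at hGdeg'
  have hCne : Polynomial.C ((-1:ℝ)^n) ≠ 0 := by
    rw [Ne, Polynomial.C_eq_zero]
    exact pow_ne_zero _ (by norm_num)
  have hGlead : G.leadingCoeff = F.leadingCoeff := by
    rw [hG, Polynomial.smul_eq_C_mul, Polynomial.leadingCoeff_mul, Polynomial.leadingCoeff_C,
      Polynomial.leadingCoeff_comp (by rw [Polynomial.natDegree_neg, Polynomial.natDegree_X]; omega)]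
    rw [Polynomial.leadingCoeff_neg, Polynomial.leadingCoeff_X, hFdeg]
    have hsq : ((-1:ℝ)^n) * ((-1:ℝ)^n) = 1 := by
      rw [← pow_add]; exact Even.neg_one_pow ⟨n, rfl⟩
    linear_combination F.leadingCoeff * hsq
  have hGdeg : G.natDegree = n := by
    rw [hG, Polynomial.smul_eq_C_mul, Polynomial.natDegree_mul hCne hGne,
      Polynomial.natDegree_C, zero_add, hGdeg']
  have hGdegpos : 0 < G.degree := Polynomial.natDegree_pos_iff_degree_pos.1 (by omega)
  have hbot := Polynomial.tendsto_atTop_of_leadingCoeff_nonneg G hGdegpos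
    (by rw [hGlead]; exact le_of_lt hFlead)
  obtain ⟨B', hB'⟩ := Filter.eventually_atTop.1 (hbot.eventually_ge_atTop 1)
  set Bt := -(max B' (-(zlo n)) + 1) with hBt
  have hBtval : 0 < (-1:ℝ)^n * F.eval Bt := by
    have h1 := hB' (max B' (-(zlo n)) + 1) (by have := le_max_left B' (-(zlo n)); linarith)
    rw [hGeval] at h1
    rw [hBt]
    linarith
  have hBtlo : Bt < zlo n := by
    rw [hBt]; have := le_max_right B' (-(zlo n)); linarith
  -- the dividing points
  set b : ℕ → ℝ := fun k => if k = 0 then T else if k = n then Bt else rootK g k with hb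
  have hb0 : b 0 = T := by simp [hb]
  have hbn : b n = Bt := by
    simp only [hb]
    rw [if_neg (by omega)]
    simp
  have hbk : ∀ k, 1 ≤ k → k ≤ n' → b k = rootK g k := by
    intro k h1 h2
    simp only [hb]
    rw [if_neg (by omega), if_neg (by omega)]
  have hb_sign : ∀ k, k ≤ n → 0 < (-1:ℝ)^k * F.eval (b k) := by
    intro k hk
    rcases Nat.eq_zero_or_pos k with rfl | hk1
    · rw [hb0]; simpa using hTpos
    rcases Nat.lt_or_ge k n with hkn | hkn
    · rw [hbk k hk1 (by omega)]; exact hsign_beta k hk1 (by omega)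
    · have hkeq : k = n := by omega
      rw [hkeq, hbn]; exact hBtval
  have hb_step : ∀ k, 1 ≤ k → k ≤ n → b k < b (k-1) := by
    intro k hk1 hk2
    rcases Nat.eq_or_lt_of_le hk1 with h1 | h1
    · -- k = 1
      rw [← h1]
      show b 1 < b 0
      rw [hb0]
      by_cases hn1 : n = 1
      · have hb1 : b 1 = Bt := by rw [show (1:ℕ) = n from hn1.symm]; exact hbn
        rw [hb1]
        have h3 : Bt < zlo 1 := by rw [hn1] at hBtlo; exact hBtlo
        have h2 : zlo 1 ≤ zhi 1 := hlohi 1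
        linarith
      · have hb1 : b 1 = rootK g 1 := hbk 1 le_rfl (by omega)
        rw [hb1]
        have h2 : rootK g 1 ≤ rootK (f ⟨0,hm⟩) 1 := (hintj ⟨0,hm⟩ 1 le_rfl (by omega)).2
        have h3 := hhi_ge 1 ⟨0,hm⟩
        linarith
    · -- k ≥ 2
      by_cases hkn : k = n
      · rw [hkn, hbn]
        have hb1 : b (n-1) = rootK g n' := by
          rw [show n - 1 = n' from by omega]
          exact hbk n' (by omega) le_rfl
        rw [hb1]
        have h2 : rootK (f ⟨0,hm⟩) n ≤ rootK g n' := by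
          have := (hintj ⟨0,hm⟩ n' (by omega) le_rfl).1
          rwa [show n' + 1 = n from rfl] at this
        have h3 := hlo_le n ⟨0,hm⟩
        linarith
      · have hb1 : b k = rootK g k := hbk k (by omega) (by omega)
        have hb2 : b (k-1) = rootK g (k-1) := hbk (k-1) (by omega) (by omega)
        rw [hb1, hb2]
        have := hbeta_lt (k-1) (by omega) (by omega)
        rwa [show k - 1 + 1 = k from by omega] at this
  have hb_mono : ∀ i k, i ≤ k → k ≤ n → b k ≤ b i := by
    intro i k
    induction k with
    | zero => intro hik _; exact le_of_eq (congrArg b (by omega : (0:ℕ) = i))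
    | succ kk ihk =>
      intro hik hkn
      rcases Nat.eq_or_lt_of_le hik with h1 | h1
      · exact le_of_eq (congrArg b h1.symm)
      · have hstep := hb_step (kk+1) (by omega) hkn
        rw [Nat.add_sub_cancel] at hstep
        exact le_trans (le_of_lt hstep) (ihk (by omega) (by omega))
  -- roots via IVT
  have hroot_ex : ∀ k, ∃ r : ℝ, (1 ≤ k → k ≤ n → (r ∈ Set.Ioo (b k) (b (k-1)) ∧ F.eval r = 0)) := by
    intro k
    by_cases hk : 1 ≤ k ∧ k ≤ n
    · obtain ⟨hk1, hk2⟩ := hk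
      have hlt : b k < b (k-1) := hb_step k hk1 hk2
      have s1 := hb_sign k hk2
      have s2 := hb_sign (k-1) (by omega)
      have hcont : ContinuousOn (fun x => F.eval x) (Set.Icc (b k) (b (k-1))) :=
        (Polynomial.continuous F).continuousOn
      have hpow : (-1:ℝ)^k = -(-1:ℝ)^(k-1) := by
        conv_lhs => rw [show k = (k-1) + 1 from by omega]
        rw [pow_succ]; ring
      rcases Nat.even_or_odd k with he | ho
      · have he1 : (-1:ℝ)^k = 1 := he.neg_one_pow
        have he2 : (-1:ℝ)^(k-1) = -1 := by
          rw [he1] at hpow; linarith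
        rw [he1, one_mul] at s1
        rw [he2] at s2
        have hs2 : F.eval (b (k-1)) < 0 := by linarith
        obtain ⟨r, hrmem, hreq⟩ := intermediate_value_Ioo' (le_of_lt hlt) hcont
          (Set.mem_Ioo.2 ⟨hs2, s1⟩)
        exact ⟨r, fun _ _ => ⟨hrmem, hreq⟩⟩
      · have ho1 : (-1:ℝ)^k = -1 := ho.neg_one_pow
        have ho2 : (-1:ℝ)^(k-1) = 1 := by
          rw [ho1] at hpow; linarith
        rw [ho1] at s1
        rw [ho2, one_mul] at s2
        have hs1 : F.eval (b k) < 0 := by linarith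
        obtain ⟨r, hrmem, hreq⟩ := intermediate_value_Ioo (le_of_lt hlt) hcont
          (Set.mem_Ioo.2 ⟨hs1, s2⟩)
        exact ⟨r, fun _ _ => ⟨hrmem, hreq⟩⟩
    · exact ⟨0, fun h1 h2 => absurd ⟨h1, h2⟩ hk⟩
  choose r hr using hroot_ex
  have hrIoo : ∀ k, 1 ≤ k → k ≤ n → b k < r k ∧ r k < b (k-1) :=
    fun k h1 h2 => ⟨(hr k h1 h2).1.1, (hr k h1 h2).1.2⟩
  have hr0 : ∀ k, 1 ≤ k → k ≤ n → F.eval (r k) = 0 := fun k h1 h2 => (hr k h1 h2).2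
  have hr_anti : ∀ k k', 1 ≤ k → k < k' → k' ≤ n → r k' < r k := by
    intro k k' h1 h2 h3
    have ha := (hrIoo k' (by omega) h3).2
    have hb2 := (hrIoo k h1 (by omega)).1
    have hmono := hb_mono k (k'-1) (by omega) (by omega)
    linarith
  set M : Multiset ℝ := Multiset.map (fun i => r (i+1)) (Multiset.range n) with hM
  have hMcard : Multiset.card M = n := by rw [hM]; simp
  have hMnodup : M.Nodup := by
    rw [hM]
    apply Multiset.Nodup.map_on _ (Multiset.nodup_range n)
    intro i hi j hj hij
    rw [Multiset.mem_range] at hi hj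
    by_contra hne2
    rcases Nat.lt_or_ge i j with h | h
    · have := hr_anti (i+1) (j+1) (by omega) (by omega) (by omega); linarith [le_of_eq hij]
    · have hji : j < i := by omega
      have := hr_anti (j+1) (i+1) (by omega) (by omega) (by omega); linarith [le_of_eq hij]
  have hMle : M ≤ F.roots := by
    rw [Multiset.le_iff_count]
    intro a
    by_cases ha : a ∈ M
    · have h1 : Multiset.count a M ≤ 1 := Multiset.nodup_iff_count_le_one.1 hMnodup a
      have h2 : 1 ≤ Multiset.count a F.roots := by
        rw [Multiset.one_le_count_iff_mem, Polynomial.mem_roots']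
        obtain ⟨i, hi, hia⟩ := Multiset.mem_map.1 (hM ▸ ha)
        rw [Multiset.mem_range] at hi
        exact ⟨hFne, by rw [← hia]; exact hr0 (i+1) (by omega) (by omega)⟩
      omega
    · rw [Multiset.count_eq_zero.2 ha]; omega
  have hMeq : M = F.roots := Multiset.eq_of_le_of_card_le hMle
    (by rw [hMcard, ← hFdeg]; exact Polynomial.card_roots' F)
  have hFrr : RealRooted F := by
    rw [RealRooted, Polynomial.splits_iff_card_roots (f := F), ← hMeq, hMcard, hFdeg]
  have hcardF : Multiset.card F.roots = n := by rw [← hMeq, hMcard]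
  have hcge_of : ∀ (z : ℝ) (c : ℕ), c ≤ n → (∀ i, 1 ≤ i → i ≤ c → z ≤ r i) →
      c ≤ cge F.roots z := by
    intro z c hc hzr
    rw [← hMeq, hM]
    unfold cge
    rw [Multiset.filter_map, Multiset.card_map]
    have hsub : Multiset.range c ≤
        Multiset.filter ((fun a => z ≤ a) ∘ fun i => r (i+1)) (Multiset.range n) := by
      rw [Multiset.le_iff_subset (Multiset.nodup_range c)]
      intro i hi
      rw [Multiset.mem_range] at hi
      rw [Multiset.mem_filter]
      exact ⟨Multiset.mem_range.2 (by omega), hzr (i+1) (by omega) (by omega)⟩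
    have := Multiset.card_le_card hsub
    simpa using this
  have hcgt_of : ∀ (z : ℝ) (c : ℕ), (∀ i, 1 ≤ i → i ≤ n → z < r i → i ≤ c) →
      cgt F.roots z ≤ c := by
    intro z c hzr
    rw [← hMeq, hM]
    unfold cgt
    rw [Multiset.filter_map, Multiset.card_map]
    have hsub : Multiset.filter ((fun a => z < a) ∘ fun i => r (i+1)) (Multiset.range n) ≤
        Multiset.range c := by
      rw [Multiset.le_iff_subset (Multiset.Nodup.filter _ (Multiset.nodup_range n))]
      intro i hi
      rw [Multiset.mem_filter, Multiset.mem_range] at hi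
      rw [Multiset.mem_range]
      have := hzr (i+1) (by omega) (by omega) hi.2
      omega
    have := Multiset.card_le_card hsub
    simpa using this
  have hnotroot : ∀ z : ℝ, (∀ i, 1 ≤ i → i ≤ n → r i ≠ z) → z ∉ F.roots := by
    intro z hz hmem
    rw [← hMeq, hM] at hmem
    obtain ⟨i, hi, hia⟩ := Multiset.mem_map.1 hmem
    rw [Multiset.mem_range] at hi
    exact hz (i+1) (by omega) (by omega) hia
  have hglue1 : ∀ k, 1 ≤ k → k ≤ n → b k ≤ zlo k := by
    intro k hk1 hk2
    rcases Nat.lt_or_ge k n with hkn | hkn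
    · rw [hbk k hk1 (by omega)]
      apply Finset.le_inf'
      intro i _
      exact (hintj i k hk1 (by omega)).2
    · have hkeq : k = n := by omega
      rw [hkeq, hbn]
      exact le_of_lt hBtlo
  have hglue2 : ∀ k, 1 ≤ k → k ≤ n → zhi k ≤ b (k-1) := by
    intro k hk1 hk2
    rcases Nat.eq_or_lt_of_le hk1 with h1 | h1
    · rw [← h1]
      show zhi 1 ≤ b 0
      rw [hb0]
      exact le_of_lt hThi
    · have hbk' : b (k-1) = rootK g (k-1) := hbk (k-1) (by omega) (by omega)
      rw [hbk']
      apply Finset.sup'_le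
      intro i _
      have h4 := (hintj i (k-1) (by omega) (by omega)).1
      have hkk : k - 1 + 1 = k := by omega
      rwa [hkk] at h4
  have hTri : ∀ k i, 1 ≤ k → k ≤ n → 1 ≤ i → i ≤ n →
      (i ≤ k - 1 → zhi k < r i) ∧ (k + 1 ≤ i → r i < zlo k) := by
    intro k i hk1 hk2 hi1 hi2
    constructor
    · intro hik
      have h1 : b i < r i := (hrIoo i hi1 hi2).1
      have h2 : b (k-1) ≤ b i := hb_mono i (k-1) (by omega) (by omega)
      have h3 := hglue2 k hk1 hk2
      linarith
    · intro hik
      have h1 : r i < b (i-1) := (hrIoo i hi1 hi2).2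
      have h2 : b (i-1) ≤ b k := hb_mono k (i-1) (by omega) (by omega)
      have h3 := hglue1 k hk1 hk2
      linarith
  have hpowk : ∀ k : ℕ, 1 ≤ k → (-1:ℝ)^k = -(-1:ℝ)^(k-1) := by
    intro k hk1
    conv_lhs => rw [show k = (k-1) + 1 from by omega]
    rw [pow_succ]; ring
  have hrk_ge : ∀ k, 1 ≤ k → k ≤ n → zlo k ≤ r k := by
    intro k hk1 hk2
    by_contra hcon
    push_neg at hcon
    have hnr : zlo k ∉ F.roots := by
      apply hnotroot
      intro i hi1 hi2 heq
      rcases Nat.lt_trichotomy i k with h | h | h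
      · have h5 := (hTri k i hk1 hk2 hi1 hi2).1 (by omega)
        have := hlohi k
        linarith
      · rw [h] at heq; linarith
      · have h5 := (hTri k i hk1 hk2 hi1 hi2).2 (by omega); linarith
    have hgt : cgt F.roots (zlo k) ≤ k - 1 := by
      apply hcgt_of
      intro i hi1 hi2 hlt
      by_contra hig
      push_neg at hig
      rcases Nat.eq_or_lt_of_le (show k ≤ i from by omega) with h | h
      · rw [← h] at hlt; linarith
      · have h5 := (hTri k i hk1 hk2 hi1 hi2).2 (by omega); linarith
    have hge : k - 1 ≤ cge F.roots (zlo k) := by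
      apply hcge_of _ _ (by omega)
      intro i hi1 hi2
      have h5 := (hTri k i hk1 hk2 hi1 (by omega)).1 (by omega)
      have := hlohi k
      linarith
    have hstrict2 := sign_eval_pos F hFrr hFlead (zlo k) hnr (k-1) hgt hge
    have hweak := hsign_lo k hk1 hk2
    rw [hpowk k hk1] at hweak
    linarith
  have hrk_le : ∀ k, 1 ≤ k → k ≤ n → r k ≤ zhi k := by
    intro k hk1 hk2
    by_contra hcon
    push_neg at hcon
    have hnr : zhi k ∉ F.roots := by
      apply hnotroot
      intro i hi1 hi2 heq
      rcases Nat.lt_trichotomy i k with h | h | h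
      · have h5 := (hTri k i hk1 hk2 hi1 hi2).1 (by omega); linarith
      · rw [h] at heq; linarith
      · have h5 := (hTri k i hk1 hk2 hi1 hi2).2 (by omega)
        have := hlohi k; linarith
    have hgt : cgt F.roots (zhi k) ≤ k := by
      apply hcgt_of
      intro i hi1 hi2 hlt
      by_contra hig
      push_neg at hig
      have h5 := (hTri k i hk1 hk2 hi1 hi2).2 (by omega)
      have := hlohi k
      linarith
    have hge : k ≤ cge F.roots (zhi k) := by
      apply hcge_of _ _ (by omega)
      intro i hi1 hi2
      rcases Nat.eq_or_lt_of_le hi2 with h | h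
      · rw [h]; exact le_of_lt hcon
      · have h5 := (hTri k i hk1 hk2 hi1 (by omega)).1 (by omega); linarith
    have hstrict2 := sign_eval_pos F hFrr hFlead (zhi k) hnr k hgt hge
    have hweak := hsign_hi k hk1 hk2
    rw [hpowk k hk1] at hstrict2
    linarith
  refine ⟨hFrr, ?_⟩
  intro k hk1 hk2
  constructor
  · intro y hy
    have hyz : y ≤ zlo k := by
      simp only [hzlo]
      exact Finset.le_inf' hne _ (fun j _ => hy j)
    have hc : k ≤ cge F.roots (zlo k) := by
      apply hcge_of _ _ (by omega)
      intro i hi1 hi2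
      rcases Nat.eq_or_lt_of_le hi2 with h | h
      · rw [h]; exact hrk_ge k hk1 hk2
      · have h5 := (hTri k i hk1 hk2 hi1 (by omega)).1 (by omega)
        have := hlohi k
        linarith
    have h2 : zlo k ≤ rootK F k := (le_rootK_iff hk1 (by rw [hcardF]; omega) _).2 hc
    linarith
  · intro x hx
    have hxz : zhi k ≤ x := by
      simp only [hzhi]
      exact Finset.sup'_le hne _ (fun j _ => hx j)
    have hc : cgt F.roots (zhi k) < k := by
      have hc2 : cgt F.roots (zhi k) ≤ k - 1 := by
        apply hcgt_of
        intro i hi1 hi2 hlt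
        by_contra hig
        push_neg at hig
        rcases Nat.eq_or_lt_of_le (show k ≤ i from by omega) with h | h
        · rw [← h] at hlt
          have := hrk_le k hk1 hk2
          linarith
        · have h5 := (hTri k i hk1 hk2 hi1 hi2).2 (by omega)
          have := hlohi k
          linarith
      omega
    have h2 : rootK F k ≤ zhi k := (rootK_le_iff hk1 (by rw [hcardF]; omega) _).2 hc
    linarith
lemma main_ind (n : ℕ) : ∀ (m : ℕ), 0 < m → ∀ (f : Fin m → Polynomial ℝ) (g : Polynomial ℝ)
    (μ : Fin m → ℝ), Hyp n f g μ → Concl n f μ := by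
  induction n with
  | zero =>
    intro m hm f g μ hh
    obtain ⟨hdeg, hlead, hrr, hg, hμ0, hμ1⟩ := hh
    have hb := Fbasic hm f hdeg hlead μ hμ0 hμ1
    constructor
    · exact Polynomial.Splits.of_natDegree_le_one (by omega)
    · intro k hk1 hk2
      omega
  | succ n' ih =>
    intro m hm f g μ hh
    by_cases hstrict : ∀ k, 1 ≤ k → k ≤ n' → (∑ j, μ j • f j).eval (rootK g k) ≠ 0
    · exact case1_lemma' n' m hm f g μ hh hstrict
    · push_neg at hstrict
      obtain ⟨k0, hk1, hk2, hk3⟩ := hstrict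
      exact case2_lemma' n' m hm f g μ hh ih ⟨k0, hk1, hk2, hk3⟩

/-- **Averages of polynomials with a common interlacing.**
If `f₁, …, f_m` are real-rooted of degree `n` with positive leading
coefficients and have a common interlacing `g`, then every convex combination
`∑ μⱼ fⱼ` is real-rooted, and its `k`-th largest root lies between
`minⱼ λ_k(fⱼ)` and `maxⱼ λ_k(fⱼ)`. -/
theorem interlacing_family_average
    {m n : ℕ} (hm : 0 < m) (f : Fin m → Polynomial ℝ)
    (hdeg : ∀ j, (f j).natDegree = n)
    (hlead : ∀ j, 0 < (f j).leadingCoeff)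
    (hrr : ∀ j, RealRooted (f j))
    (g : Polynomial ℝ) (hg : ∀ j, Interlaces g (f j))
    (μ : Fin m → ℝ) (hμ0 : ∀ j, 0 ≤ μ j) (hμ1 : ∑ j, μ j = 1) :
    RealRooted (∑ j, μ j • f j) ∧
    ∀ k, 1 ≤ k → k ≤ n →
      (∃ j, rootK (f j) k ≤ rootK (∑ j', μ j' • f j') k) ∧
      (∃ j, rootK (∑ j', μ j' • f j') k ≤ rootK (f j) k) := by
  have hne : (Finset.univ : Finset (Fin m)).Nonempty := ⟨⟨0, hm⟩, Finset.mem_univ _⟩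
  obtain ⟨hsp, hroots⟩ := main_ind n m hm f g μ ⟨hdeg, hlead, hrr, hg, hμ0, hμ1⟩
  refine ⟨hsp, fun k hk1 hk2 => ⟨?_, ?_⟩⟩
  · obtain ⟨j0, _, hj0⟩ := Finset.exists_min_image Finset.univ (fun j => rootK (f j) k) hne
    exact ⟨j0, (hroots k hk1 hk2).1 (rootK (f j0) k) (fun j => hj0 j (Finset.mem_univ j))⟩
  · obtain ⟨j0, _, hj0⟩ := Finset.exists_max_image Finset.univ (fun j => rootK (f j) k) hne
    exact ⟨j0, (hroots k hk1 hk2).2 (rootK (f j0) k) (fun j => hj0 j (Finset.mem_univ j))⟩
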